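/- arXiv:2006.11685 — 3 statements merged into one kernel-verified Lean document; each statement's English description precedes it below -/
import Mathlib

section
/- Let Z be a finite subset of {0,1}^d and let Δ_simplex be the set {λ ∈ ℝ^d : λ_i > 0, Σ_i λ_i = 1}. For a finite nonempty set V ⊆ ℝ^d, the function f(λ) = E_{η∼N(0,I_d)}[ max_{v∈V} ⟨v, diag(λ_i^{-1/2}) η⟩ ] is convex on the set of λ with all coordinates strictly positive. -/
open MeasureTheory ProbabilityTheory

noncomputable abbrev gpi (d : ℕ) : Measure (Fin d → ℝ) :=
  Measure.pi fun _ : Fin d => gaussianReal 0 1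

theorem integrable_id_gauss : Integrable (fun x : ℝ => x) (gaussianReal 0 1) := by
  rw [gaussianReal_of_var_ne_zero 0 one_ne_zero]
  rw [integrable_withDensity_iff (measurable_gaussianPDF 0 1)
    (ae_of_all _ fun x => ENNReal.ofReal_lt_top)]
  have h := (integrable_mul_exp_neg_mul_sq (b := (1:ℝ)/2) (by norm_num)).const_mul
    ((Real.sqrt (2 * Real.pi))⁻¹)
  refine h.congr (ae_of_all _ fun x => ?_)
  simp only [gaussianPDF_def, gaussianPDFReal]
  ring_nf
  rw [ENNReal.toReal_ofReal (by positivity)]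
  push_cast
  ring_nf

variable {d : ℕ}

theorem mp_eval (i : Fin d) :
    MeasurePreserving (Function.eval i) (gpi d) (gaussianReal 0 1) := by
  refine ⟨measurable_pi_apply i, ?_⟩
  ext s hs
  rw [Measure.map_apply (measurable_pi_apply i) hs]
  have hpre : Function.eval i ⁻¹' s =
      Set.pi Set.univ (fun j => if j = i then s else Set.univ) := by
    ext η
    simp only [Set.mem_preimage, Set.mem_pi, Set.mem_univ, forall_true_left]
    constructor
    · intro h j
      by_cases hj : j = i <;> simp [hj, h]
    · intro h
      have := h i
      simpa using this
  rw [hpre, Measure.pi_pi]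
  rw [Finset.prod_eq_single i (fun j _ hj => by simp [hj]) (by simp)]
  simp

theorem mp_neg_gauss :
    MeasurePreserving (fun x : ℝ => -x) (gaussianReal 0 1) (gaussianReal 0 1) := by
  refine ⟨measurable_neg, ?_⟩
  have h := gaussianReal_map_const_mul (μ := 0) (v := 1) (-1)
  rw [show (fun x : ℝ => -x) = fun x : ℝ => (-1) * x from funext fun x => (neg_one_mul x).symm]
  rw [h]
  norm_num

theorem integrable_eval (i : Fin d) : Integrable (fun η : Fin d → ℝ => η i) (gpi d) :=
  ((mp_eval i).integrable_comp integrable_id_gauss.aestronglyMeasurable).2 integrable_id_gauss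

/-- the Gaussian width type functional -/
noncomputable def gw (V : Finset (Fin d → ℝ)) (hV : V.Nonempty) (σ : Fin d → ℝ) : ℝ :=
  ∫ η, V.sup' hV (fun v => ∑ i, v i * (σ i * η i)) ∂(gpi d)

variable {V : Finset (Fin d → ℝ)} {hV : V.Nonempty}

theorem integrable_lin (c : Fin d → ℝ) :
    Integrable (fun η : Fin d → ℝ => ∑ i, c i * (η i)) (gpi d) :=
  integrable_finset_sum _ fun i _ => (integrable_eval i).const_mul _

theorem measurable_sup_lin (V : Finset (Fin d → ℝ)) (hV : V.Nonempty) (σ : Fin d → ℝ) :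
    Measurable (fun η : Fin d → ℝ => V.sup' hV (fun v => ∑ i, v i * (σ i * η i))) := by
  have heq : (fun η : Fin d → ℝ => V.sup' hV (fun v => ∑ i, v i * (σ i * η i)))
      = V.sup' hV (fun v η => ∑ i, v i * (σ i * η i)) := by
    funext η; rw [Finset.sup'_apply]
  rw [heq]
  exact Finset.measurable_sup' hV fun v _ =>
    Finset.measurable_sum _ fun i _ => ((measurable_pi_apply i).const_mul _).const_mul _

theorem integrable_sup (σ : Fin d → ℝ) :
    Integrable (fun η : Fin d → ℝ => V.sup' hV (fun v => ∑ i, v i * (σ i * η i))) (gpi d) := by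
  induction hV using Finset.Nonempty.cons_induction with
  | singleton v =>
      simpa only [Finset.sup'_singleton] using
        (by simpa only [mul_assoc] using integrable_lin (fun i => v i * σ i) :
          Integrable (fun η : Fin d → ℝ => ∑ i, v i * (σ i * η i)) (gpi d))
  | cons v s hvs hs ih =>
      simp only [Finset.sup'_cons hs]
      exact ((by simpa only [mul_assoc] using integrable_lin (fun i => v i * σ i) :
        Integrable (fun η : Fin d → ℝ => ∑ i, v i * (σ i * η i)) (gpi d))).sup ih

theorem sum_combo (a b : ℝ) (σ τ : Fin d → ℝ) (v η : Fin d → ℝ) :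
    ∑ i, v i * ((a * σ i + b * τ i) * η i)
      = a * ∑ i, v i * (σ i * η i) + b * ∑ i, v i * (τ i * η i) := by
  rw [Finset.mul_sum, Finset.mul_sum, ← Finset.sum_add_distrib]
  exact Finset.sum_congr rfl fun i _ => by ring

theorem gw_combo (V : Finset (Fin d → ℝ)) (hV : V.Nonempty) {a b : ℝ} (ha : 0 ≤ a) (hb : 0 ≤ b)
    (σ τ : Fin d → ℝ) :
    gw V hV (fun i => a * σ i + b * τ i) ≤ a * gw V hV σ + b * gw V hV τ := by
  unfold gw
  rw [← integral_const_mul, ← integral_const_mul,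
    ← integral_add ((integrable_sup σ).const_mul a) ((integrable_sup τ).const_mul b)]
  refine integral_mono (integrable_sup _)
    (((integrable_sup σ).const_mul a).add ((integrable_sup τ).const_mul b)) fun η => ?_
  refine Finset.sup'_le hV _ fun v hv => ?_
  rw [sum_combo]
  exact add_le_add
    (mul_le_mul_of_nonneg_left (Finset.le_sup' (fun v => ∑ i, v i * (σ i * η i)) hv) ha)
    (mul_le_mul_of_nonneg_left (Finset.le_sup' (fun v => ∑ i, v i * (τ i * η i)) hv) hb)

theorem gw_flip (V : Finset (Fin d → ℝ)) (hV : V.Nonempty) (σ : Fin d → ℝ) (i : Fin d) :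
    gw V hV σ = gw V hV (Function.update σ i (-σ i)) := by
  classical
  set f : Fin d → ℝ → ℝ := fun j x => if j = i then -x else x with hf
  have hmp : MeasurePreserving (fun (η : Fin d → ℝ) j => f j (η j)) (gpi d) (gpi d) := by
    refine measurePreserving_pi _ _ fun j => ?_
    by_cases hj : j = i
    · simpa [hf, hj] using mp_neg_gauss
    · convert MeasurePreserving.id (gaussianReal 0 1) using 1
      funext x; simp [hf, hj]
  unfold gw
  conv_lhs => rw [← hmp.map_eq]
  rw [integral_map hmp.measurable.aemeasurable
      (by rw [hmp.map_eq]; exact (measurable_sup_lin V hV σ).aestronglyMeasurable)]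
  refine integral_congr_ae (ae_of_all _ fun η => ?_)
  refine Finset.sup'_congr hV rfl fun v _ => Finset.sum_congr rfl fun j _ => ?_
  by_cases hj : j = i
  · subst hj
    simp only [hf, Function.update_self, if_pos rfl]
    ring
  · simp [hf, hj, Function.update_of_ne hj]
theorem gw_mono_update (V : Finset (Fin d → ℝ)) (hV : V.Nonempty) (ρ : Fin d → ℝ) (i : Fin d)
    {s t : ℝ} (hs : 0 ≤ s) (hst : s ≤ t) :
    gw V hV (Function.update ρ i s) ≤ gw V hV (Function.update ρ i t) := by
  rcases eq_or_lt_of_le (hs.trans hst) with h0 | ht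
  · have hs0 : s = 0 := le_antisymm (hst.trans h0.symm.le) hs
    rw [hs0, ← h0]
  · set θ := (t + s) / (2 * t) with hθ
    have hθ0 : 0 ≤ θ := div_nonneg (by linarith) (by linarith)
    have hθ1 : 0 ≤ 1 - θ := by
      have : θ ≤ 1 := by
        rw [hθ, div_le_one (by linarith)]
        linarith
      linarith
    have hcomb : Function.update ρ i s
        = fun j => θ * Function.update ρ i t j + (1 - θ) * Function.update ρ i (-t) j := by
      funext j
      by_cases hj : j = i
      · subst hj
        simp only [Function.update_self, hθ]
        field_simp
        ring
      · simp only [Function.update_of_ne hj]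
        ring
    have hflip : gw V hV (Function.update ρ i (-t)) = gw V hV (Function.update ρ i t) := by
      have h := gw_flip V hV (Function.update ρ i t) i
      simp only [Function.update_self, Function.update_idem] at h
      exact h.symm
    calc gw V hV (Function.update ρ i s)
        = gw V hV (fun j => θ * Function.update ρ i t j + (1 - θ) * Function.update ρ i (-t) j) :=
          congrArg _ hcomb
      _ ≤ θ * gw V hV (Function.update ρ i t) + (1 - θ) * gw V hV (Function.update ρ i (-t)) :=
          gw_combo V hV hθ0 hθ1 _ _
      _ = gw V hV (Function.update ρ i t) := by rw [hflip]; ring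

theorem gw_mono (V : Finset (Fin d → ℝ)) (hV : V.Nonempty) {σ τ : Fin d → ℝ}
    (hσ : ∀ i, 0 ≤ σ i) (hστ : ∀ i, σ i ≤ τ i) : gw V hV σ ≤ gw V hV τ := by
  classical
  set mix : ℕ → (Fin d → ℝ) := fun k j => if (j : ℕ) < k then τ j else σ j with hmix
  have h0 : mix 0 = σ := funext fun j => if_neg (Nat.not_lt_zero _)
  have hd : mix d = τ := funext fun j => if_pos j.isLt
  have step : ∀ k, gw V hV (mix k) ≤ gw V hV (mix (k + 1)) := by
    intro k
    by_cases hk : k < d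
    · set i : Fin d := ⟨k, hk⟩ with hi
      have e1 : mix k = Function.update (mix k) i (σ i) := by
        funext j
        by_cases hj : j = i
        · subst hj
          rw [Function.update_self]
          simp only [hmix]
          exact if_neg (by simp [hi])
        · rw [Function.update_of_ne hj]
      have e2 : mix (k + 1) = Function.update (mix k) i (τ i) := by
        funext j
        by_cases hj : j = i
        · subst hj
          rw [Function.update_self]
          simp only [hmix]
          exact if_pos (by simp [hi])
        · rw [Function.update_of_ne hj]
          simp only [hmix]
          have hjk : (j : ℕ) ≠ k := fun h => hj (Fin.ext (by simp [hi, h]))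
          by_cases hlt : (j : ℕ) < k
          · rw [if_pos (Nat.lt_succ_of_lt hlt), if_pos hlt]
          · rw [if_neg (by omega), if_neg hlt]
      calc gw V hV (mix k) = gw V hV (Function.update (mix k) i (σ i)) := congrArg _ e1
        _ ≤ gw V hV (Function.update (mix k) i (τ i)) :=
            gw_mono_update V hV _ i (hσ i) (hστ i)
        _ = gw V hV (mix (k + 1)) := (congrArg _ e2).symm
    · have heq : mix (k + 1) = mix k := by
        funext j
        simp only [hmix]
        have h1 : (j : ℕ) < k := lt_of_lt_of_le j.isLt (le_of_not_gt hk)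
        rw [if_pos (Nat.lt_succ_of_lt h1), if_pos h1]
      exact le_of_eq (congrArg _ heq).symm
  have chain : ∀ k, gw V hV (mix 0) ≤ gw V hV (mix k) := by
    intro k
    induction k with
    | zero => exact le_rfl
    | succ n ih => exact ih.trans (step n)
  have hfin := chain d
  rwa [h0, hd] at hfin

theorem invsqrt_combo {x y a b : ℝ} (hx : 0 < x) (hy : 0 < y) (ha : 0 ≤ a) (hb : 0 ≤ b)
    (hab : a + b = 1) :
    (Real.sqrt (a * x + b * y))⁻¹ ≤ a * (Real.sqrt x)⁻¹ + b * (Real.sqrt y)⁻¹ := by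
  have hu : 0 < Real.sqrt x := Real.sqrt_pos.2 hx
  have hw : 0 < Real.sqrt y := Real.sqrt_pos.2 hy
  set u := Real.sqrt x with hu'
  set w := Real.sqrt y with hw'
  have hu2 : u ^ 2 = x := Real.sq_sqrt hx.le
  have hw2 : w ^ 2 = y := Real.sq_sqrt hy.le
  have huw : 0 < a * u + b * w := by
    rcases ha.lt_or_eq with h | h
    · exact add_pos_of_pos_of_nonneg (mul_pos h hu) (mul_nonneg hb hw.le)
    · have hb1 : b = 1 := by linarith
      rw [← h, hb1]; simpa using hw
  have h1 : a * u + b * w ≤ Real.sqrt (a * x + b * y) := by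
    rw [show a * x + b * y = (a * u ^ 2 + b * w ^ 2) by rw [hu2, hw2]]
    rw [Real.le_sqrt huw.le]
    · nlinarith [mul_nonneg (mul_nonneg ha hb) (sq_nonneg (u - w))]
    · positivity
  have h2 : (Real.sqrt (a * x + b * y))⁻¹ ≤ (a * u + b * w)⁻¹ := by
    exact inv_anti₀ huw h1
  have h3 : (a * u + b * w)⁻¹ ≤ a * u⁻¹ + b * w⁻¹ := by
    have he : a * u⁻¹ + b * w⁻¹ = (a * w + b * u) / (u * w) := by
      field_simp
    rw [he, inv_eq_one_div, div_le_div_iff₀ huw (mul_pos hu hw)]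
    calc 1 * (u * w) = (a + b) ^ 2 * (u * w) := by rw [hab]; ring
      _ ≤ (a * w + b * u) * (a * u + b * w) := by
          nlinarith [mul_nonneg (mul_nonneg ha hb) (sq_nonneg (u - w))]
  exact h2.trans h3

/-- The map `λ ↦ E[max_{v∈V} ⟨v, diag(λ_i^{-1/2}) η⟩]` is convex on the set of
vectors `λ` with all coordinates strictly positive. -/
theorem gaussian_width_design_convex
    {d : ℕ} (V : Finset (Fin d → ℝ)) (hV : V.Nonempty) :
    ConvexOn ℝ {lam : Fin d → ℝ | ∀ i, 0 < lam i}
      (fun lam => ∫ η, V.sup' hV (fun v => ∑ i, v i * η i / Real.sqrt (lam i))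
        ∂(Measure.pi fun _ : Fin d => gaussianReal 0 1)) := by
  constructor
  · have hset : {lam : Fin d → ℝ | ∀ i, 0 < lam i}
        = Set.univ.pi (fun _ : Fin d => Set.Ioi (0 : ℝ)) := by
      ext lam; simp [Set.mem_pi]
    rw [hset]
    exact convex_pi fun i _ => convex_Ioi 0
  · intro lam hlam kap hkap a b ha hb hab
    have hrw : ∀ μ : Fin d → ℝ,
        (∫ η, V.sup' hV (fun v => ∑ i, v i * η i / Real.sqrt (μ i))
          ∂(Measure.pi fun _ : Fin d => gaussianReal 0 1))
        = gw V hV (fun i => (Real.sqrt (μ i))⁻¹) := by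
      intro μ
      unfold gw
      refine integral_congr_ae (ae_of_all _ fun η => ?_)
      refine Finset.sup'_congr hV rfl fun v _ => Finset.sum_congr rfl fun i _ => ?_
      rw [div_eq_mul_inv]; ring
    simp only [smul_eq_mul]
    rw [hrw (a • lam + b • kap), hrw lam, hrw kap]
    refine le_trans (gw_mono V hV (fun i => by positivity) fun i => ?_)
      (gw_combo V hV ha hb _ _)
    have h := invsqrt_combo (hlam i) (hkap i) ha hb hab
    simpa [Pi.add_apply, Pi.smul_apply, smul_eq_mul] using h
end

section
/- Let Z ⊂ {0,1}^d (viewed as indicator vectors of subsets of [d]) be the set of indicator vectors of size-k subsets of [d] (Top-K instance), and suppose θ ∈ ℝ^d satisfies θ₁ ≥ θ₂ ≥ ... ≥ θ_d with θ_k > θ_{k+1}. Define Δ_i = θ_i − θ_{k+1} for i ≤ k and Δ_i = θ_k − θ_i for i > k, and H = Σ_{i=1}^d Δ_i^{-2}. Then ρ* := inf_{λ∈simplex} max_{z∈Z, z≠z*} ‖z*−z‖²_{diag(λ)^{-1}} / ⟨θ, z*−z⟩² ≥ H, where z* is the indicator of {1,...,k} and ‖v‖²_{diag(λ)^{-1}}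 = Σ_i v_i²/λ_i. -/
open Matrix

lemma swap_mem_aux {d k : ℕ} (ST : Finset (Fin d)) (hcard : ST.card = k)
    {p q : Fin d} (hp : p ∈ ST) (hq : q ∉ ST) :
    insert q (ST.erase p) ∈ ((Finset.powersetCard k (Finset.univ : Finset (Fin d))).erase ST) := by
  rw [Finset.mem_erase, Finset.mem_powersetCard]
  refine ⟨?_, fun x _ => Finset.mem_univ x, ?_⟩
  · intro h
    apply hq
    rw [← h]
    exact Finset.mem_insert_self _ _
  · rw [Finset.card_insert_of_notMem (fun h => hq (Finset.mem_of_mem_erase h)),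
      Finset.card_erase_of_mem hp, hcard]
    have : 0 < k := hcard ▸ Finset.card_pos.mpr ⟨p, hp⟩
    omega

lemma swap_indicator_aux {d : ℕ} (ST : Finset (Fin d)) {p q : Fin d}
    (hp : p ∈ ST) (hq : q ∉ ST) (i : Fin d) :
    ((if i ∈ ST then (1 : ℝ) else 0) - (if i ∈ insert q (ST.erase p) then 1 else 0)) =
      (if i = p then 1 else 0) - (if i = q then 1 else 0) := by
  have hpq : p ≠ q := fun h => hq (h ▸ hp)
  by_cases h1 : i = p
  · subst h1
    simp [Finset.mem_insert, hp, hpq]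
  · by_cases h2 : i = q
    · subst h2
      simp [Finset.mem_insert, hq, Ne.symm hpq]
    · by_cases h3 : i ∈ ST <;> simp [Finset.mem_insert, h1, h2, h3]

/-- Top-K lower bound on `ρ*`: for any design `λ` in the (interior of the)
simplex, the worst-case normalized variance is at least `H = ∑ᵢ Δᵢ⁻²`. -/
theorem topk_rho_lower_bound
    {d k : ℕ} (hk : 0 < k) (hkd : k < d)
    (θ : Fin d → ℝ) (hmono : ∀ i j : Fin d, i ≤ j → θ j ≤ θ i)
    (hgap : θ ⟨k, hkd⟩ < θ ⟨k - 1, by omega⟩)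
    (ST : Finset (Fin d)) (hST : ST = (Finset.univ : Finset (Fin d)).filter (fun i : Fin d => (i : ℕ) < k))
    (hne : ((Finset.powersetCard k (Finset.univ : Finset (Fin d))).erase ST).Nonempty)
    (Δ : Fin d → ℝ)
    (hΔ : ∀ i : Fin d, Δ i =
      if (i : ℕ) < k then θ i - θ ⟨k, hkd⟩ else θ ⟨k - 1, by omega⟩ - θ i)
    (lam : Fin d → ℝ) (hlam : ∀ i, 0 < lam i) (hsum : ∑ i, lam i = 1) :
    (∑ i, 1 / (Δ i) ^ 2) ≤
      ((Finset.powersetCard k (Finset.univ : Finset (Fin d))).erase ST).sup' hne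
        (fun S =>
          (∑ i, ((if i ∈ ST then (1 : ℝ) else 0) - (if i ∈ S then 1 else 0)) ^ 2 / lam i) /
          (∑ i, θ i * ((if i ∈ ST then (1 : ℝ) else 0) - (if i ∈ S then 1 else 0))) ^ 2) := by
  set a : Fin d := ⟨k - 1, by omega⟩ with ha
  set b : Fin d := ⟨k, hkd⟩ with hb
  set H : ℝ := ∑ i, 1 / (Δ i) ^ 2 with hH
  -- basic facts
  have hSTcard : ST.card = k := by
    have : ST = Finset.Iio b := by
      rw [hST]; ext i; simp [Fin.lt_def, hb]
    rw [this, Fin.card_Iio]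
  have hav : (a : ℕ) = k - 1 := rfl
  have hbv : (b : ℕ) = k := rfl
  have haST : a ∈ ST := by rw [hST]; simp only [Finset.mem_filter, Finset.mem_univ, true_and, hav]; omega
  have hbST : b ∉ ST := by rw [hST]; simp only [Finset.mem_filter, Finset.mem_univ, true_and, hbv]; omega
  have hΔpos : ∀ i, 0 < Δ i := by
    intro i
    rw [hΔ i]
    by_cases hik : (i : ℕ) < k
    · simp only [hik, if_true]
      have : θ a ≤ θ i := hmono i a (by rw [Fin.le_def, hav]; omega)
      linarith
    · simp only [hik, if_false]
      have : θ i ≤ θ b := hmono b i (by rw [Fin.le_def, hbv]; omega)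
      linarith
  -- there exists i with H * lam i ≤ 1 / Δ i ^ 2
  obtain ⟨i, -, hi⟩ : ∃ i ∈ (Finset.univ : Finset (Fin d)), H * lam i ≤ 1 / (Δ i) ^ 2 := by
    by_contra h
    push_neg at h
    have hlt : ∑ i, 1 / (Δ i) ^ 2 < ∑ i, H * lam i :=
      Finset.sum_lt_sum_of_nonempty ⟨⟨0, by omega⟩, Finset.mem_univ _⟩
        (fun i _ => h i (Finset.mem_univ i))
    rw [← Finset.mul_sum, hsum, mul_one] at hlt
    exact absurd hlt (lt_irrefl H)
  -- choose the swap pair (p, q) with p ∈ ST, q ∉ ST and θ p - θ q = Δ i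
  obtain ⟨p, q, hp, hq, hθpq, hpqi⟩ :
      ∃ p q : Fin d, p ∈ ST ∧ q ∉ ST ∧ θ p - θ q = Δ i ∧ (p = i ∨ q = i) := by
    by_cases hik : (i : ℕ) < k
    · exact ⟨i, b, by rw [hST]; simp [hik], hbST, by rw [hΔ i]; simp [hik, hb], Or.inl rfl⟩
    · exact ⟨a, i, haST, by rw [hST]; simp; omega, by rw [hΔ i]; simp [hik, ha], Or.inr rfl⟩
  set S : Finset (Fin d) := insert q (ST.erase p) with hS
  have hmem : S ∈ ((Finset.powersetCard k (Finset.univ : Finset (Fin d))).erase ST) :=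
    swap_mem_aux ST hSTcard hp hq
  have hpq : p ≠ q := fun h => hq (h ▸ hp)
  refine le_trans ?_ (Finset.le_sup' _ hmem)
  -- compute the numerator
  have hnum : (∑ j, ((if j ∈ ST then (1 : ℝ) else 0) - (if j ∈ S then 1 else 0)) ^ 2 / lam j)
      = 1 / lam p + 1 / lam q := by
    have : ∀ j : Fin d,
        ((if j ∈ ST then (1 : ℝ) else 0) - (if j ∈ S then 1 else 0)) ^ 2 / lam j
        = (if j = p then 1 / lam j else 0) + (if j = q then 1 / lam j else 0) := by
      intro j
      rw [swap_indicator_aux ST hp hq j]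
      by_cases h1 : j = p
      · subst h1; simp [hpq]
      · by_cases h2 : j = q
        · subst h2; simp [h1]
        · simp [h1, h2]
    rw [Finset.sum_congr rfl (fun j _ => this j), Finset.sum_add_distrib,
      Finset.sum_ite_eq' Finset.univ p (fun j => 1 / lam j),
      Finset.sum_ite_eq' Finset.univ q (fun j => 1 / lam j)]
    simp
  -- compute the denominator
  have hden : (∑ j, θ j * ((if j ∈ ST then (1 : ℝ) else 0) - (if j ∈ S then 1 else 0)))
      = θ p - θ q := by
    have : ∀ j : Fin d,
        θ j * ((if j ∈ ST then (1 : ℝ) else 0) - (if j ∈ S then 1 else 0))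
        = (if j = p then θ j else 0) - (if j = q then θ j else 0) := by
      intro j
      rw [swap_indicator_aux ST hp hq j]
      by_cases h1 : j = p
      · subst h1; simp [hpq]
      · by_cases h2 : j = q
        · subst h2; simp [h1]
        · simp [h1, h2]
    rw [Finset.sum_congr rfl (fun j _ => this j), Finset.sum_sub_distrib,
      Finset.sum_ite_eq' Finset.univ p (fun j => θ j),
      Finset.sum_ite_eq' Finset.univ q (fun j => θ j)]
    simp
  rw [hnum, hden, hθpq]
  -- final arithmetic
  have hΔi := hΔpos i
  have hlami := hlam i
  have h1 : H * lam i * (Δ i) ^ 2 ≤ 1 := by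
    have := mul_le_mul_of_nonneg_right hi (le_of_lt (pow_pos hΔi 2))
    rwa [one_div, inv_mul_cancel₀ (by positivity)] at this
  rw [le_div_iff₀ (pow_pos hΔi 2)]
  rcases hpqi with h | h
  · subst h
    have : 0 ≤ 1 / lam q := le_of_lt (by have := hlam q; positivity)
    have h2 : H * (Δ p) ^ 2 ≤ 1 / lam p := by
      rw [le_div_iff₀ (hlam p)]; nlinarith [h1]
    linarith
  · subst h
    have : 0 ≤ 1 / lam p := le_of_lt (by have := hlam p; positivity)
    have h2 : H * (Δ q) ^ 2 ≤ 1 / lam q := by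
      rw [le_div_iff₀ (hlam q)]; nlinarith [h1]
    linarith
end

section
/- Fix k < d, let Z = {z₁,...,z_{d−k}} ⊂ {0,1}^d where z₁ is the indicator of {1,...,k} and z_j (j ≥ 2) is the indicator of the singleton {k+j−1}, and let θ = ε·(indicator of {1,...,k}) for some ε > 0. With measurement set X = {e₁,...,e_d} and A(λ) = diag(λ), we have ρ* := inf_{λ∈simplex} max_{j≥2} ‖z₁−z_j‖²_{diag(λ)^{-1}} / ⟨θ, z₁−z_j⟩² ≤ 2(k² + d)/(kε)². -/
open Matrix

/-- Sum over `Fin d` of a function of the underlying `ℕ`, split at `k`. -/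
lemma sum_fin_split {d k : ℕ} (hkd : k ≤ d) (g : ℕ → ℝ) :
    ∑ i : Fin d, g (i : ℕ) =
      (∑ i ∈ Finset.range k, g i) + ∑ i ∈ Finset.Ico k d, g i := by
  rw [Fin.sum_univ_eq_sum_range g d, Finset.range_eq_Ico, Finset.range_eq_Ico]
  exact (Finset.sum_Ico_consecutive g (Nat.zero_le k) hkd).symm

/-- Upper bound on `ρ*` for the instance `Z = {1_{[k]}, e_{k+1}, …, e_d}` with
`θ = ε·1_{[k]}`: some design achieves value at most `2(k² + d)/(kε)²`. -/
theorem rho_upper_bound_instance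
    {d k : ℕ} (hk : 0 < k) (hkd : k < d) (ε : ℝ) (hε : 0 < ε) :
    ∃ lam : Fin d → ℝ, (∀ i, 0 ≤ lam i) ∧ (∑ i, lam i = 1) ∧
      Finset.univ.sup' ⟨(⟨0, by omega⟩ : Fin (d - k)), Finset.mem_univ _⟩
        (fun j : Fin (d - k) =>
          (∑ i : Fin d, ((if (i : ℕ) < k then (1 : ℝ) else 0)
              - (if (i : ℕ) = k + (j : ℕ) then 1 else 0)) ^ 2 / lam i) /
          (∑ i : Fin d, (if (i : ℕ) < k then ε else 0) *
              ((if (i : ℕ) < k then (1 : ℝ) else 0)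
                - (if (i : ℕ) = k + (j : ℕ) then 1 else 0))) ^ 2)
      ≤ 2 * ((k : ℝ) ^ 2 + d) / (k * ε) ^ 2 := by
  have hk0 : (0 : ℝ) < (k : ℝ) := by exact_mod_cast hk
  have hd0 : (0 : ℝ) < (d : ℝ) := by
    have : (0:ℕ) < d := lt_trans hk hkd
    exact_mod_cast this
  set a : ℝ := 1 / (2 * k) + 1 / (2 * d) with ha
  have ha0 : 0 < a := by positivity
  refine ⟨fun i => if (i : ℕ) < k then a else 1 / (2 * d), ?_, ?_, ?_⟩
  · intro i; dsimp only; split <;> positivity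
  · calc (∑ i : Fin d, if (i : ℕ) < k then a else 1 / (2 * (d:ℝ)))
        = (∑ i ∈ Finset.range k, if i < k then a else 1 / (2 * (d:ℝ)))
          + ∑ i ∈ Finset.Ico k d, (if i < k then a else 1 / (2 * (d:ℝ))) :=
          sum_fin_split hkd.le (fun n : ℕ => if n < k then a else 1 / (2 * (d:ℝ)))
      _ = (∑ _i ∈ Finset.range k, a)
          + ∑ _i ∈ Finset.Ico k d, (1 / (2 * (d:ℝ))) := by
          refine congrArg₂ (· + ·) ?_ ?_ <;>
            refine Finset.sum_congr rfl fun i hi => ?_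
          · exact if_pos (Finset.mem_range.mp hi)
          · exact if_neg (by have := (Finset.mem_Ico.mp hi).1; omega)
      _ = (k : ℝ) * a + ((d : ℝ) - k) * (1 / (2 * (d:ℝ))) := by
          rw [Finset.sum_const, Finset.sum_const, Finset.card_range, Nat.card_Ico,
            nsmul_eq_mul, nsmul_eq_mul, Nat.cast_sub hkd.le]
      _ = 1 := by rw [ha]; field_simp; ring
  · apply Finset.sup'_le
    intro j _
    have hjd : k + (j : ℕ) < d := by have := j.2; omega
    have hnum : (∑ i : Fin d, ((if (i : ℕ) < k then (1 : ℝ) else 0)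
              - (if (i : ℕ) = k + (j : ℕ) then 1 else 0)) ^ 2 /
              (if (i : ℕ) < k then a else 1 / (2 * (d:ℝ))))
        = (k : ℝ) / a + 2 * (d:ℝ) := by
      calc (∑ i : Fin d, ((if (i : ℕ) < k then (1 : ℝ) else 0)
              - (if (i : ℕ) = k + (j : ℕ) then 1 else 0)) ^ 2 /
              (if (i : ℕ) < k then a else 1 / (2 * (d:ℝ))))
          = (∑ i ∈ Finset.range k, (((if i < k then (1 : ℝ) else 0)
              - (if i = k + (j : ℕ) then 1 else 0)) ^ 2 /
              (if i < k then a else 1 / (2 * (d:ℝ)))))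
            + ∑ i ∈ Finset.Ico k d, (((if i < k then (1 : ℝ) else 0)
              - (if i = k + (j : ℕ) then 1 else 0)) ^ 2 /
              (if i < k then a else 1 / (2 * (d:ℝ)))) :=
            sum_fin_split hkd.le (fun n : ℕ => ((if n < k then (1:ℝ) else 0)
              - (if n = k + (j:ℕ) then 1 else 0)) ^ 2
              / (if n < k then a else 1 / (2 * (d:ℝ))))
        _ = (∑ _i ∈ Finset.range k, 1 / a)
            + ∑ i ∈ Finset.Ico k d, (if i = k + (j:ℕ) then 2 * (d:ℝ) else 0) := by
            refine congrArg₂ (· + ·) ?_ ?_ <;>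
              refine Finset.sum_congr rfl fun i hi => ?_
            · have hik := Finset.mem_range.mp hi
              rw [if_pos hik, if_pos hik, if_neg (by omega)]
              norm_num
            · have hik : ¬ i < k := by have := (Finset.mem_Ico.mp hi).1; omega
              rw [if_neg hik, if_neg hik]
              split <;> field_simp <;> norm_num
        _ = (k : ℝ) / a + 2 * (d:ℝ) := by
            rw [Finset.sum_const, Finset.card_range, nsmul_eq_mul,
              Finset.sum_ite_eq' (Finset.Ico k d) (k + (j:ℕ)),
              if_pos (Finset.mem_Ico.mpr ⟨Nat.le_add_right _ _, hjd⟩)]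
            ring
    have hden : (∑ i : Fin d, (if (i : ℕ) < k then ε else 0) *
              ((if (i : ℕ) < k then (1 : ℝ) else 0)
                - (if (i : ℕ) = k + (j : ℕ) then 1 else 0)))
        = (k : ℝ) * ε := by
      calc (∑ i : Fin d, (if (i : ℕ) < k then ε else 0) *
              ((if (i : ℕ) < k then (1 : ℝ) else 0)
                - (if (i : ℕ) = k + (j : ℕ) then 1 else 0)))
          = (∑ i ∈ Finset.range k, ((if i < k then ε else 0) *
              ((if i < k then (1 : ℝ) else 0)
                - (if i = k + (j : ℕ) then 1 else 0))))
            + ∑ i ∈ Finset.Ico k d, ((if i < k then ε else 0) *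
              ((if i < k then (1 : ℝ) else 0)
                - (if i = k + (j : ℕ) then 1 else 0))) :=
            sum_fin_split hkd.le (fun n : ℕ => (if n < k then ε else 0)
              * ((if n < k then (1:ℝ) else 0) - (if n = k + (j:ℕ) then 1 else 0)))
        _ = (∑ _i ∈ Finset.range k, ε) + ∑ _i ∈ Finset.Ico k d, (0:ℝ) := by
            refine congrArg₂ (· + ·) ?_ ?_ <;>
              refine Finset.sum_congr rfl fun i hi => ?_
            · have hik := Finset.mem_range.mp hi
              rw [if_pos hik, if_pos hik, if_neg (by omega)]
              ring
            · have hik : ¬ i < k := by have := (Finset.mem_Ico.mp hi).1; omega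
              rw [if_neg hik, zero_mul]
        _ = (k : ℝ) * ε := by
            rw [Finset.sum_const, Finset.card_range, nsmul_eq_mul, Finset.sum_const,
              smul_zero, add_zero]
    rw [hnum, hden]
    have hka : (k : ℝ) / a ≤ 2 * k ^ 2 := by
      rw [div_le_iff₀ ha0, ha]
      have hkd' : (0:ℝ) ≤ (k:ℝ)^2 / d := by positivity
      have hexp : 2 * (k:ℝ) ^ 2 * (1 / (2 * k) + 1 / (2 * d)) = k + k^2 / d := by
        field_simp
      linarith
    have hpos : (0:ℝ) < ((k:ℝ) * ε) ^ 2 := by positivity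
    rw [div_le_div_iff₀ hpos hpos]
    nlinarith [hpos, sq_nonneg ((k:ℝ)*ε)]
end
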